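/- For every finite graph G on n ≥ 2 vertices, the treedepth of G satisfies tw(G) ≤ td(G) ≤ (tw(G)+1) · log₂ n, where tw denotes treewidth (in particular the first inequality tw(G) + 1 ≤ td(G) holds, stated with the convention that treewidth of a graph with an edge is at least 1). -/

import Mathlib

structure RootedForest (V : Type) where
  parent : V → Option V
  vdepth : V → ℕ
  vdepth_root : ∀ v, parent v = none → vdepth v = 1
  vdepth_parent : ∀ v p, parent v = some p → vdepth v = vdepth p + 1

namespace RootedForest

variable {V : Type}

/-- `F.Anc u v` means `u` is an ancestor of `v` (reflexively). -/
def Anc (F : RootedForest V) (u v : V) : Prop :=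
  Relation.ReflTransGen (fun a b => F.parent a = some b) v u

/-- ancestors of `u`, including `u` itself. -/
def tail (F : RootedForest V) (u : V) : Set V := {w | F.Anc w u}

/-- descendants of `u`, including `u` itself. -/
def desc (F : RootedForest V) (u : V) : Set V := {w | F.Anc u w}

def comp (F : RootedForest V) (u : V) : Set V := F.tail u ∪ F.desc u

/-- ancestor closure of a set of vertices. -/
def cl (F : RootedForest V) (A : Set V) : Set V := ⋃ u ∈ A, F.tail u

/-- children of `u`. -/
def chld (F : RootedForest V) (u : V) : Set V := {v | F.parent v = some u}

/-- the forest has depth at most `d`. -/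
def DepthLE (F : RootedForest V) (d : ℕ) : Prop := ∀ v, F.vdepth v ≤ d

/-- the forest consists of a single tree. -/
def IsTree (F : RootedForest V) : Prop := ∃ r, ∀ v, F.Anc r v

end RootedForest

/-- `F` is an elimination forest of `G`: every edge joins an ancestor/descendant pair. -/
def SimpleGraph.IsElimForest {V : Type} (G : SimpleGraph V) (F : RootedForest V) : Prop :=
  ∀ u v, G.Adj u v → F.Anc u v ∨ F.Anc v u

/-- the treedepth of a graph. -/
noncomputable def SimpleGraph.treedepth {V : Type} (G : SimpleGraph V) : ℕ :=
  sInf {d | ∃ F : RootedForest V, G.IsElimForest F ∧ F.DepthLE d}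

/-- A tree decomposition of `G` over index type `ι`. -/
structure TreeDecomp {V : Type} (G : SimpleGraph V) (ι : Type) where
  tree : SimpleGraph ι
  isTree : tree.IsTree
  bag : ι → Set V
  covers_vertex : ∀ v, ∃ i, v ∈ bag i
  covers_edge : ∀ u v, G.Adj u v → ∃ i, u ∈ bag i ∧ v ∈ bag i
  bags_connected : ∀ v, (tree.induce {i | v ∈ bag i}).Connected

/-- the treewidth of a graph. -/
noncomputable def SimpleGraph.treewidth {V : Type} (G : SimpleGraph V) : ℕ :=
  sInf {w | ∃ (ι : Type) (D : TreeDecomp G ι), ∀ i, (D.bag i).ncard ≤ w + 1}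


set_option linter.unusedSectionVars false

open Relation

section EnumForest
variable {V : Type} [Fintype V]

noncomputable def enumForest (V : Type) [Fintype V] : RootedForest V where
  parent v := if h : ((Fintype.equivFin V) v : ℕ) = 0 then none else
    some ((Fintype.equivFin V).symm ⟨((Fintype.equivFin V) v : ℕ) - 1, by
      have := ((Fintype.equivFin V) v).2; omega⟩)
  vdepth v := ((Fintype.equivFin V) v : ℕ) + 1
  vdepth_root v h := by
    by_cases h0 : ((Fintype.equivFin V) v : ℕ) = 0
    · simp [h0]
    · simp [h0] at h
  vdepth_parent v p h := by
    by_cases h0 : ((Fintype.equivFin V) v : ℕ) = 0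
    · simp [h0] at h
    · simp only [h0, dite_false, Option.some_inj] at h
      subst h
      simp only [Equiv.apply_symm_apply]
      omega

lemma enumForest_anc (u v : V)
    (h : ((Fintype.equivFin V) u : ℕ) ≤ ((Fintype.equivFin V) v : ℕ)) :
    (enumForest V).Anc u v := by
  set e := Fintype.equivFin V with he
  obtain ⟨n, hn⟩ : ∃ n, (e v : ℕ) = n := ⟨_, rfl⟩
  induction n generalizing v with
  | zero =>
      have : u = v := by
        have : (e u : ℕ) = (e v : ℕ) := by omega
        have : e u = e v := Fin.ext this
        exact e.injective this
      subst this; exact ReflTransGen.refl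
  | succ n ih =>
      rcases Nat.lt_or_ge (e u : ℕ) (e v : ℕ) with hlt | hge
      · have hp : (enumForest V).parent v = some (e.symm ⟨(e v : ℕ) - 1, by
          have := (e v).2; omega⟩) := by
          simp only [enumForest, ← he]
          rw [dif_neg (by omega)]
        refine ReflTransGen.head hp (ih _ ?_ ?_)
        · simp [← he]; omega
        · simp [← he]; omega
      · have : u = v := e.injective (Fin.ext (by omega))
        subst this; exact ReflTransGen.refl

lemma treedepth_mem (G : SimpleGraph V) :
    Fintype.card V ∈ {d | ∃ F : RootedForest V, G.IsElimForest F ∧ F.DepthLE d} := by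
  refine ⟨enumForest V, ?_, ?_⟩
  · intro u v _
    rcases Nat.le_total ((Fintype.equivFin V) u : ℕ) ((Fintype.equivFin V) v : ℕ) with h | h
    · exact Or.inl (enumForest_anc u v h)
    · exact Or.inr (enumForest_anc v u h)
  · intro v
    show ((Fintype.equivFin V) v : ℕ) + 1 ≤ _
    have := ((Fintype.equivFin V) v).2
    omega

end EnumForest

section Part1
open scoped Classical
variable {V : Type} [Fintype V]

namespace RootedForest
variable (F : RootedForest V)

lemma one_le_vdepth (v : V) : 1 ≤ F.vdepth v := by
  cases h : F.parent v with
  | none => rw [F.vdepth_root v h]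
  | some p => rw [F.vdepth_parent v p h]; omega

lemma mem_tail_iff {v w : V} : w ∈ F.tail v ↔ w = v ∨ ∃ p, F.parent v = some p ∧ w ∈ F.tail p := by
  constructor
  · intro h
    rcases (Relation.ReflTransGen.cases_head h) with h | ⟨p, hp, h⟩
    · exact Or.inl h.symm
    · exact Or.inr ⟨p, hp, h⟩
  · rintro (rfl | ⟨p, hp, h⟩)
    · exact Relation.ReflTransGen.refl
    · exact Relation.ReflTransGen.head hp h

lemma ncard_tail_le_aux : ∀ (n : ℕ) (v : V), F.vdepth v ≤ n → (F.tail v).ncard ≤ F.vdepth v := by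
  intro n
  induction n with
  | zero => intro v hv; have := F.one_le_vdepth v; omega
  | succ n ih =>
      intro v hv
      cases h : F.parent v with
      | none =>
          have : F.tail v = {v} := by
            ext w
            rw [F.mem_tail_iff]
            simp [h]
          rw [this, Set.ncard_singleton]
          exact F.one_le_vdepth v
      | some p =>
          have hveq := F.vdepth_parent v p h
          have : F.tail v = insert v (F.tail p) := by
            ext w
            rw [F.mem_tail_iff]
            simp only [h, Set.mem_insert_iff, Option.some_inj]
            constructor
            · rintro (rfl | ⟨q, hq, hw⟩)
              · exact Or.inl rfl
              · subst hq; exact Or.inr hw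
            · rintro (rfl | hw)
              · exact Or.inl rfl
              · exact Or.inr ⟨p, rfl, hw⟩
          rw [this]
          calc (insert v (F.tail p)).ncard ≤ (F.tail p).ncard + 1 := Set.ncard_insert_le _ _
          _ ≤ F.vdepth p + 1 := by have := ih p (by omega); omega
          _ = F.vdepth v := hveq.symm

lemma ncard_tail_le (v : V) : (F.tail v).ncard ≤ F.vdepth v :=
  F.ncard_tail_le_aux (F.vdepth v) v le_rfl

lemma exists_root [Nonempty V] : ∃ r, F.parent r = none := by
  obtain ⟨v, -, hv⟩ := Finset.exists_min_image Finset.univ F.vdepth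
    ⟨Classical.arbitrary V, Finset.mem_univ _⟩
  refine ⟨v, ?_⟩
  cases h : F.parent v with
  | none => rfl
  | some p =>
      have h1 := F.vdepth_parent v p h
      have h2 := hv p (Finset.mem_univ p)
      omega

/-- total parent function, sending roots (and `r0`) to `r0`. -/
def pa (r0 : V) (v : V) : V := (F.parent v).getD r0

/-- potential function for acyclicity arguments. -/
noncomputable def phi (r0 : V) (v : V) : ℕ := if v = r0 then 0 else F.vdepth v

variable {r0 : V}

lemma pa_r0 (hr0 : F.parent r0 = none) : F.pa r0 r0 = r0 := by simp [pa, hr0]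

lemma phi_pa_lt (v : V) (hv : v ≠ r0) : F.phi r0 (F.pa r0 v) < F.phi r0 v := by
  have h1 : F.phi r0 v = F.vdepth v := if_neg hv
  cases h : F.parent v with
  | none =>
      have : F.pa r0 v = r0 := by simp [pa, h]
      rw [this, h1, F.vdepth_root v h]
      simp [phi]
  | some p =>
      have hp : F.pa r0 v = p := by simp [pa, h]
      rw [hp, h1, F.vdepth_parent v p h]
      unfold phi
      split
      · omega
      · have := F.one_le_vdepth p; omega

lemma pa_ne (v : V) (hv : v ≠ r0) : F.pa r0 v ≠ v := by
  intro h
  have := F.phi_pa_lt (r0 := r0) v hv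
  rw [h] at this
  exact lt_irrefl _ this

/-- The support tree of an elimination forest: each non-root vertex joined to its
parent, and every root joined to `r0`. -/
def supGraph (F : RootedForest V) (r0 : V) : SimpleGraph V where
  Adj u v := u ≠ v ∧ (F.pa r0 u = v ∨ F.pa r0 v = u)
  symm := by
    constructor
    rintro u v ⟨h1, h2 | h2⟩
    · exact ⟨h1.symm, Or.inr h2⟩
    · exact ⟨h1.symm, Or.inl h2⟩
  loopless := ⟨fun v h => h.1 rfl⟩

lemma supGraph_adj_max (hr0 : F.parent r0 = none) {u v : V}
    (h : (supGraph F r0).Adj u v) (hphi : F.phi r0 v ≤ F.phi r0 u) : F.pa r0 u = v := by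
  rcases h with ⟨hne, h | h⟩
  · exact h
  · by_cases hv : v = r0
    · subst hv
      rw [F.pa_r0 hr0] at h
      exact absurd h.symm hne
    · have := F.phi_pa_lt v hv
      rw [h] at this
      omega

lemma supGraph_adj_pa (v : V) (hv : v ≠ r0) : (supGraph F r0).Adj v (F.pa r0 v) :=
  ⟨(F.pa_ne v hv).symm, Or.inl rfl⟩

lemma supGraph_reach_aux (hr0 : F.parent r0 = none) :
    ∀ (n : ℕ) (v : V), F.phi r0 v ≤ n → (supGraph F r0).Reachable v r0 := by
  intro n
  induction n with
  | zero =>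
      intro v hv
      have : v = r0 := by
        by_contra hne
        have : F.phi r0 v = F.vdepth v := if_neg hne
        have := F.one_le_vdepth v
        omega
      subst this; rfl
  | succ n ih =>
      intro v hv
      by_cases hne : v = r0
      · subst hne; rfl
      · have h1 := F.phi_pa_lt v hne
        exact ((F.supGraph_adj_pa v hne).reachable).trans (ih _ (by omega))

lemma supGraph_connected (hr0 : F.parent r0 = none) : (supGraph F r0).Connected := by
  have : Nonempty V := ⟨r0⟩
  refine ⟨fun u v => ?_⟩
  exact (F.supGraph_reach_aux hr0 _ u le_rfl).trans
    (F.supGraph_reach_aux hr0 _ v le_rfl).symm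

lemma supGraph_acyclic (hr0 : F.parent r0 = none) : (supGraph F r0).IsAcyclic := by
  intro v c hc
  classical
  obtain ⟨u, hu_mem, hu_max⟩ := Finset.exists_max_image c.support.toFinset (F.phi r0)
    ⟨v, by simp⟩
  rw [List.mem_toFinset] at hu_mem
  have hc' : (c.rotate u hu_mem).IsCycle := hc.rotate hu_mem
  have hsupp : ∀ x ∈ (c.rotate u hu_mem).support, F.phi r0 x ≤ F.phi r0 u := by
    intro x hx
    rw [SimpleGraph.Walk.support_eq_cons] at hx
    rcases List.mem_cons.1 hx with rfl | hx
    · exact le_rfl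
    · have hx2 := ((SimpleGraph.Walk.support_rotate c u hu_mem).mem_iff).1 hx
      exact hu_max x (List.mem_toFinset.2 (List.mem_of_mem_tail hx2))
  set c' : (supGraph F r0).Walk u u := c.rotate u hu_mem with hc'def
  clear_value c'
  cases c' with
  | nil => exact hc'.ne_nil rfl
  | @cons _ x _ h1 p =>
      have hx : F.pa r0 u = x := by
        refine F.supGraph_adj_max hr0 h1 (hsupp x ?_)
        rw [SimpleGraph.Walk.support_cons]
        exact List.mem_cons_of_mem _ p.start_mem_support
      -- last edge: look at p.reverse
      have hp : p = p.reverse.reverse := (SimpleGraph.Walk.reverse_reverse p).symm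
      set q : (supGraph F r0).Walk u x := p.reverse with hqdef
      clear_value q
      cases q with
      | nil => exact h1.ne (by rfl)
      | @cons _ y _ h2 q' =>
          have hy : F.pa r0 u = y := by
            refine F.supGraph_adj_max hr0 h2 (hsupp y ?_)
            rw [SimpleGraph.Walk.support_cons]
            right
            have : y ∈ p.reverse.support := by
              rw [← hqdef, SimpleGraph.Walk.support_cons]
              right
              exact q'.start_mem_support
            rw [SimpleGraph.Walk.support_reverse, List.mem_reverse] at this
            exact this
          have hmem : s(u, y) ∈ p.edges := by
            have h3 : s(u, y) ∈ p.reverse.edges := by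
              rw [← hqdef, SimpleGraph.Walk.edges_cons]
              exact List.mem_cons_self
            rw [SimpleGraph.Walk.edges_reverse, List.mem_reverse] at h3
            exact h3
          have hnodup : (SimpleGraph.Walk.cons h1 p).edges.Nodup := hc'.1.1.edges_nodup
          rw [SimpleGraph.Walk.edges_cons, List.nodup_cons] at hnodup
          rw [← hy, hx] at hmem
          exact hnodup.1 hmem

/-- The tree decomposition associated with an elimination forest. -/
noncomputable def toDecomp (F : RootedForest V) {G : SimpleGraph V} (hG : G.IsElimForest F)
    (r0 : V) (hr0 : F.parent r0 = none) : TreeDecomp G V where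
  tree := supGraph F r0
  isTree := ⟨F.supGraph_connected hr0, F.supGraph_acyclic hr0⟩
  bag i := F.tail i
  covers_vertex v := ⟨v, Relation.ReflTransGen.refl⟩
  covers_edge u v h := by
    rcases hG u v h with h' | h'
    · exact ⟨v, h', Relation.ReflTransGen.refl⟩
    · exact ⟨u, Relation.ReflTransGen.refl, h'⟩
  bags_connected v := by
    have key : ∀ w (h : F.Anc v w),
        ((supGraph F r0).induce {i | v ∈ F.tail i}).Reachable ⟨w, h⟩ ⟨v, Relation.ReflTransGen.refl⟩ := by
      intro w h
      induction h using Relation.ReflTransGen.head_induction_on with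
      | refl => exact SimpleGraph.Reachable.refl _
      | @head a c step tl ih =>
          refine (SimpleGraph.Adj.reachable ?_).trans ih
          show (supGraph F r0).Adj a c
          refine ⟨?_, Or.inl ?_⟩
          · intro e
            have := F.vdepth_parent a c step
            subst e; omega
          · simp [pa, step]
    have : Nonempty {i | v ∈ F.tail i} := ⟨⟨v, Relation.ReflTransGen.refl⟩⟩
    refine SimpleGraph.Connected.mk ?_
    rintro ⟨a, ha⟩ ⟨b, hb⟩
    exact (key a ha).trans (key b hb).symm

lemma treewidth_le_of_elimForest [Nonempty V] {G : SimpleGraph V} (F : RootedForest V)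
    (hG : G.IsElimForest F) {d : ℕ} (hd : F.DepthLE d) : G.treewidth + 1 ≤ d := by
  obtain ⟨r0, hr0⟩ := F.exists_root
  have h1 : 1 ≤ d := le_trans (F.one_le_vdepth (Classical.arbitrary V)) (hd _)
  have h2 : G.treewidth ≤ d - 1 := by
    refine Nat.sInf_le ⟨V, F.toDecomp hG r0 hr0, fun i => ?_⟩
    have ha := F.ncard_tail_le i
    have hb := hd i
    show (F.tail i).ncard ≤ (d - 1) + 1
    omega
  omega

end RootedForest

lemma part_one {G : SimpleGraph V} (hn : 2 ≤ Fintype.card V) :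
    G.treewidth + 1 ≤ G.treedepth := by
  have : Nonempty V := Fintype.card_pos_iff.1 (by omega)
  refine le_csInf ⟨_, treedepth_mem G⟩ ?_
  rintro d ⟨F, hF, hd⟩
  exact RootedForest.treewidth_le_of_elimForest F hF hd

end Part1

section TreeLemmas
open SimpleGraph Relation
open scoped Classical
variable {ι : Type} {T : SimpleGraph ι} (hT : T.IsTree)

noncomputable def tpath (a b : ι) : T.Walk a b := (hT.existsUnique_path a b).choose

lemma tpath_isPath (a b : ι) : (tpath hT a b).IsPath := (hT.existsUnique_path a b).choose_spec.1

lemma tpath_unique {a b : ι} (p : T.Walk a b) (hp : p.IsPath) : p = tpath hT a b :=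
  (hT.existsUnique_path a b).choose_spec.2 p hp

variable (r : ι)

/-- `i` lies on the path from `k` to the root `r`. -/
def Dsc (i k : ι) : Prop := i ∈ (tpath hT k r).support

lemma dsc_self (k : ι) : Dsc hT r k k := (tpath hT k r).start_mem_support

lemma dsc_root (k : ι) : Dsc hT r r k := (tpath hT k r).end_mem_support

lemma tpath_dropUntil {a : ι} {k : ι} (h : a ∈ (tpath hT k r).support) :
    (tpath hT k r).dropUntil a h = tpath hT a r :=
  tpath_unique hT _ ((tpath_isPath hT k r).dropUntil h)

lemma support_subset_of_adj {k k' : ι} (h : T.Adj k k') :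
    (tpath hT k' r).support ⊆ k' :: (tpath hT k r).support := by
  by_cases hmem : k' ∈ (tpath hT k r).support
  · rw [← tpath_dropUntil hT r hmem]
    intro x hx
    exact List.mem_cons_of_mem _ ((tpath hT k r).support_dropUntil_subset hmem hx)
  · have hpath : (SimpleGraph.Walk.cons h.symm (tpath hT k r)).IsPath := by
      rw [SimpleGraph.Walk.cons_isPath_iff]
      exact ⟨tpath_isPath hT k r, hmem⟩
    rw [← tpath_unique hT _ hpath, SimpleGraph.Walk.support_cons]
    exact fun x hx => hx

lemma dsc_antisymm {a b : ι} (hab : a ∈ (tpath hT b r).support)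
    (hba : b ∈ (tpath hT a r).support) : a = b := by
  by_contra hne
  have hsplit := (tpath hT a r).take_spec hba
  have hdrop : (tpath hT a r).dropUntil b hba = tpath hT b r := tpath_dropUntil hT r hba
  have hnodup := (tpath_isPath hT a r).support_nodup
  rw [← hsplit, SimpleGraph.Walk.support_append, List.nodup_append] at hnodup
  refine hnodup.2.2 _ ((tpath hT a r).takeUntil b hba).start_mem_support _ ?_ rfl
  have : a ∈ ((tpath hT a r).dropUntil b hba).support := by rw [hdrop]; exact hab
  rw [SimpleGraph.Walk.support_eq_cons] at this
  rcases List.mem_cons.1 this with rfl | h2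
  · exact absurd rfl hne
  · exact h2

lemma support_of_child {j i : ι} (hadj : T.Adj j i) (hji : i ∈ (tpath hT j r).support) :
    (tpath hT j r).support = j :: (tpath hT i r).support := by
  have htake : (tpath hT j r).takeUntil i hji = SimpleGraph.Walk.cons hadj SimpleGraph.Walk.nil := by
    have h1 : ((tpath hT j r).takeUntil i hji) = tpath hT j i :=
      tpath_unique hT _ ((tpath_isPath hT j r).takeUntil hji)
    have h2 : (SimpleGraph.Walk.cons hadj (SimpleGraph.Walk.nil)) = tpath hT j i := by
      refine tpath_unique hT _ ?_
      rw [SimpleGraph.Walk.cons_isPath_iff]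
      refine ⟨SimpleGraph.Walk.IsPath.nil, ?_⟩
      simp only [SimpleGraph.Walk.support_nil, List.mem_singleton]
      exact hadj.ne
    rw [h1, h2]
  have hsplit := (tpath hT j r).take_spec hji
  have hdrop : (tpath hT j r).dropUntil i hji = tpath hT i r := tpath_dropUntil hT r hji
  conv_lhs => rw [← hsplit]
  rw [SimpleGraph.Walk.support_append, htake, hdrop]
  rw [SimpleGraph.Walk.support_eq_cons (tpath hT i r)]
  rfl

lemma depth_lt_of_child {j i : ι} (hadj : T.Adj j i) (hji : i ∈ (tpath hT j r).support) :
    (tpath hT i r).length < (tpath hT j r).length := by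
  have h1 := congrArg List.length (support_of_child hT r hadj hji)
  rw [SimpleGraph.Walk.length_support, List.length_cons, SimpleGraph.Walk.length_support] at h1
  omega

lemma adj_dsc {i k k' : ι} (h : T.Adj k k') (hk : Dsc hT r i k) (hne : k ≠ i) :
    Dsc hT r i k' := by
  have := support_subset_of_adj hT r h.symm (k := k') (k' := k)
  rcases List.mem_cons.1 (this hk) with rfl | h2
  · exact absurd rfl hne
  · exact h2

lemma child_exists_aux {i : ι} :
    ∀ {k : ι} (p : T.Walk k r), p.IsPath → i ∈ p.support → k ≠ i →
      ∃ j, T.Adj j i ∧ i ∈ (tpath hT j r).support ∧ j ∈ p.support := by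
  intro k p
  induction p with
  | nil =>
      intro _ hi hk
      simp only [SimpleGraph.Walk.support_nil, List.mem_singleton] at hi
      exact absurd hi.symm hk
  | @cons a x b h p ih =>
      intro hpath hi hk
      by_cases hx : x = i
      · subst hx
        refine ⟨a, h, ?_, SimpleGraph.Walk.start_mem_support _⟩
        rw [← tpath_unique hT _ hpath, SimpleGraph.Walk.support_cons]
        exact List.mem_cons_of_mem _ p.start_mem_support
      · have hi' : i ∈ p.support := by
          rcases List.mem_cons.1 hi with rfl | h2
          · exact absurd rfl hk
          · exact h2
        obtain ⟨j, h1, h2, h3⟩ := ih hpath.of_cons hi' hx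
        exact ⟨j, h1, h2, List.mem_cons_of_mem _ h3⟩

lemma child_exists {i k : ι} (hk : Dsc hT r i k) (hne : k ≠ i) :
    ∃ j, T.Adj j i ∧ Dsc hT r i j ∧ Dsc hT r j k := by
  obtain ⟨j, h1, h2, h3⟩ := child_exists_aux hT r (tpath hT k r) (tpath_isPath hT k r) hk hne
  exact ⟨j, h1, h2, h3⟩

lemma same_child {i j k k' : ι} (hkk' : T.Adj k k') (hadj : T.Adj j i)
    (hchild : Dsc hT r i j) (hjk : Dsc hT r j k) (hik' : Dsc hT r i k') (hk'i : k' ≠ i) :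
    Dsc hT r j k' := by
  rcases List.mem_cons.1 (support_subset_of_adj hT r hkk'.symm hjk) with rfl | h2
  · -- j = k, so k' is adjacent to j
    by_cases hmem : k' ∈ (tpath hT j r).support
    · rw [support_of_child hT r hadj hchild] at hmem
      rcases List.mem_cons.1 hmem with rfl | h3
      · exact dsc_self hT r k'
      · exact absurd (dsc_antisymm hT r h3 hik') hk'i
    · have hpath : (SimpleGraph.Walk.cons hkk'.symm (tpath hT j r)).IsPath := by
        rw [SimpleGraph.Walk.cons_isPath_iff]
        exact ⟨tpath_isPath hT j r, hmem⟩
      show j ∈ (tpath hT k' r).support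
      rw [← tpath_unique hT _ hpath, SimpleGraph.Walk.support_cons]
      exact List.mem_cons_of_mem _ (tpath hT j r).start_mem_support
  · exact h2

end TreeLemmas

section ChainLemmas
open SimpleGraph Relation
open scoped Classical
variable {α : Type} (H : SimpleGraph α)

/-- reachability within a set of vertices. -/
def SChain (S : Set α) (a b : α) : Prop :=
  Relation.ReflTransGen (fun x y => H.Adj x y ∧ x ∈ S ∧ y ∈ S) a b

/-- a set of vertices is connected in `H`. -/
def ConnOn (S : Set α) : Prop := ∀ a ∈ S, ∀ b ∈ S, SChain H S a b

variable {H}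

lemma SChain.symm {S : Set α} {a b : α} (h : SChain H S a b) : SChain H S b a := by
  have hs : Symmetric (fun x y => H.Adj x y ∧ x ∈ S ∧ y ∈ S) :=
    fun x y ⟨h1, h2, h3⟩ => ⟨h1.symm, h3, h2⟩
  haveI : Std.Symm (fun x y => H.Adj x y ∧ x ∈ S ∧ y ∈ S) := ⟨fun a b h => hs h⟩
  exact Relation.ReflTransGen.symmetric.symm _ _ h

lemma SChain.mono {S S' : Set α} (hs : S ⊆ S') {a b : α} (h : SChain H S a b) :
    SChain H S' a b :=
  Relation.ReflTransGen.mono (fun x y ⟨h1, h2, h3⟩ => ⟨h1, hs h2, hs h3⟩) _ _ h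

lemma walkOfChain {S : Set α} {a b : α} (h : SChain H S a b) (ha : a ∈ S) :
    ∃ w : H.Walk a b, ∀ x ∈ w.support, x ∈ S := by
  induction h using Relation.ReflTransGen.head_induction_on with
  | refl => exact ⟨SimpleGraph.Walk.nil, by simpa using ha⟩
  | @head x c step tl ih =>
      obtain ⟨w, hw⟩ := ih step.2.2
      refine ⟨SimpleGraph.Walk.cons step.1 w, ?_⟩
      intro y hy
      rcases List.mem_cons.1 hy with rfl | hy
      · exact step.2.1
      · exact hw y hy

lemma chainOfWalk {S : Set α} : ∀ {a b : α} (w : H.Walk a b), (∀ x ∈ w.support, x ∈ S) →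
    SChain H S a b := by
  intro a b w
  induction w with
  | nil => intro _; exact Relation.ReflTransGen.refl
  | @cons u x v h p ih =>
      intro hs
      refine Relation.ReflTransGen.head ⟨h, ?_, ?_⟩ (ih ?_)
      · exact hs u (SimpleGraph.Walk.start_mem_support _)
      · refine hs x ?_
        rw [SimpleGraph.Walk.support_cons]
        exact List.mem_cons_of_mem _ p.start_mem_support
      · intro y hy
        refine hs y ?_
        rw [SimpleGraph.Walk.support_cons]
        exact List.mem_cons_of_mem _ hy

lemma chainOfInducedWalk {S : Set α} : ∀ {a b : ↑S} (w : (H.induce S).Walk a b),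
    SChain H S a.1 b.1 := by
  intro a b w
  induction w with
  | nil => exact Relation.ReflTransGen.refl
  | @cons u x v h p ih =>
      exact Relation.ReflTransGen.head ⟨h, u.2, x.2⟩ ih

lemma connOn_of_induced (S : Set α) (h : (H.induce S).Connected) : ConnOn H S := by
  intro a ha b hb
  obtain ⟨w⟩ := h.preconnected ⟨a, ha⟩ ⟨b, hb⟩
  exact chainOfInducedWalk w

lemma connOn_inter {ι : Type} {T : SimpleGraph ι} (hT : T.IsTree) {S₁ S₂ : Set ι}
    (h1 : ConnOn T S₁) (h2 : ConnOn T S₂) : ConnOn T (S₁ ∩ S₂) := by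
  rintro a ⟨ha1, ha2⟩ b ⟨hb1, hb2⟩
  obtain ⟨w1, hw1⟩ := walkOfChain (h1 a ha1 b hb1) ha1
  obtain ⟨w2, hw2⟩ := walkOfChain (h2 a ha2 b hb2) ha2
  have hb1p := tpath_unique hT w1.bypass w1.bypass_isPath
  have hb2p := tpath_unique hT w2.bypass w2.bypass_isPath
  refine chainOfWalk (tpath hT a b) ?_
  intro x hx
  constructor
  · refine hw1 x (w1.support_bypass_subset ?_)
    rw [hb1p]; exact hx
  · refine hw2 x (w2.support_bypass_subset ?_)
    rw [hb2p]; exact hx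

end ChainLemmas

section SepDefs
open scoped Classical
variable {V : Type}

/-- vertices of `A` outside `B`. -/
def exS (A : Finset V) (B : Set V) : Set V := {x | x ∈ A ∧ x ∉ B}

variable (G : SimpleGraph V)

/-- the connected component of `v` in `G[A \ B]`. -/
noncomputable def cutC (A : Finset V) (B : Set V) (v : V) : Finset V :=
  A.filter (fun u => u ∉ B ∧ SChain G (exS A B) v u)

lemma mem_cutC {A : Finset V} {B : Set V} {v u : V} :
    u ∈ cutC G A B v ↔ u ∈ A ∧ u ∉ B ∧ SChain G (exS A B) v u := by
  simp [cutC]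

end SepDefs

section Separator
open scoped Classical
open Finset
variable {V : Type} {G : SimpleGraph V}

theorem exists_balanced_bag {ι : Type} (D : TreeDecomp G ι) (A : Finset V) (hA : A.Nonempty) :
    ∃ i, ∀ v ∈ A, v ∉ D.bag i → (cutC G A (D.bag i) v).card ≤ A.card / 2 := by
  classical
  obtain ⟨v₀, hv₀⟩ := hA
  have hT : D.tree.IsTree := D.isTree
  set T := D.tree with hTdef
  -- representatives of vertices and edges
  set rep : V → ι := fun v => (D.covers_vertex v).choose with hrepdef
  have hrep : ∀ v, v ∈ D.bag (rep v) := fun v => (D.covers_vertex v).choose_spec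
  set erep : V → V → ι := fun u v =>
    if h : G.Adj u v then (D.covers_edge u v h).choose else rep u with herepdef
  have herep : ∀ u v, (h : G.Adj u v) → u ∈ D.bag (erep u v) ∧ v ∈ D.bag (erep u v) := by
    intro u v h
    simp only [herepdef, dif_pos h]
    exact (D.covers_edge u v h).choose_spec
  set NF : Finset ι := A.image rep ∪ (A ×ˢ A).image (fun p => erep p.1 p.2) with hNFdef
  set I : Finset ι := (NF ×ˢ NF).biUnion (fun p => (tpath hT p.1 p.2).support.toFinset)
    with hIdef
  have hpairI : ∀ a ∈ NF, ∀ b ∈ NF, ∀ x ∈ (tpath hT a b).support, x ∈ I := by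
    intro a ha b hb x hx
    refine Finset.mem_biUnion.2 ⟨(a, b), Finset.mem_product.2 ⟨ha, hb⟩, ?_⟩
    exact List.mem_toFinset.2 hx
  have hNFI : ∀ a ∈ NF, a ∈ I := fun a ha =>
    hpairI a ha a ha a (tpath hT a a).start_mem_support
  have hconnI : ConnOn T ↑I := by
    intro a ha b hb
    obtain ⟨p, hp, hpa⟩ := Finset.mem_biUnion.1 ha
    obtain ⟨q, hq, hqb⟩ := Finset.mem_biUnion.1 hb
    rw [Finset.mem_product] at hp hq
    rw [List.mem_toFinset] at hpa hqb
    have c1 : SChain T ↑I a p.1 := by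
      refine chainOfWalk (((tpath hT p.1 p.2).takeUntil a hpa).reverse) ?_
      intro x hx
      rw [SimpleGraph.Walk.support_reverse, List.mem_reverse] at hx
      exact hpairI _ hp.1 _ hp.2 x ((tpath hT p.1 p.2).support_takeUntil_subset hpa hx)
    have c2 : SChain T ↑I p.1 q.1 := by
      refine chainOfWalk (tpath hT p.1 q.1) ?_
      intro x hx
      exact hpairI _ hp.1 _ hq.1 x hx
    have c3 : SChain T ↑I q.1 b := by
      refine chainOfWalk ((tpath hT q.1 q.2).takeUntil b hqb) ?_
      intro x hx
      exact hpairI _ hq.1 _ hq.2 x ((tpath hT q.1 q.2).support_takeUntil_subset hqb hx)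
    exact (c1.trans c2).trans c3
  have hclosed : ∀ k ∈ I, ∀ k' ∈ I, ∀ x ∈ (tpath hT k k').support, x ∈ I := by
    intro k hk k' hk' x hx
    obtain ⟨w, hw⟩ := walkOfChain (hconnI k hk k' hk') hk
    have hbp := tpath_unique hT w.bypass w.bypass_isPath
    rw [← hbp] at hx
    exact hw x (w.support_bypass_subset hx)
  set r : ι := rep v₀ with hrdef
  have hrNF : r ∈ NF := Finset.mem_union_left _ (Finset.mem_image_of_mem _ hv₀)
  have hrI : r ∈ I := hNFI _ hrNF
  -- bag subtrees restricted to I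
  set Sub : V → Set ι := fun v => {i | v ∈ D.bag i} ∩ ↑I with hSubdef
  have hSubConn : ∀ v, ConnOn T (Sub v) := fun v =>
    connOn_inter hT (connOn_of_induced _ (D.bags_connected v)) hconnI
  have hrepSub : ∀ v ∈ A, rep v ∈ Sub v := by
    intro v hv
    exact ⟨hrep v, by
      exact_mod_cast hNFI _ (Finset.mem_union_left _ (Finset.mem_image_of_mem _ hv))⟩
  have herepSub : ∀ u ∈ A, ∀ v ∈ A, (h : G.Adj u v) →
      erep u v ∈ Sub u ∧ erep u v ∈ Sub v := by
    intro u hu v hv h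
    have hin : erep u v ∈ I := hNFI _ (Finset.mem_union_right _
      (Finset.mem_image.2 ⟨(u, v), Finset.mem_product.2 ⟨hu, hv⟩, rfl⟩))
    exact ⟨⟨(herep u v h).1, by exact_mod_cast hin⟩, ⟨(herep u v h).2, by exact_mod_cast hin⟩⟩
  -- weights and the heaviest deepest bag
  set weight : ι → ℕ := fun i => (A.filter (fun v => ∀ k ∈ Sub v, Dsc hT r i k)).card
    with hweightdef
  have hheavy_r : A.card / 2 + 1 ≤ weight r := by
    have : A.filter (fun v => ∀ k ∈ Sub v, Dsc hT r r k) = A := by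
      refine Finset.filter_true_of_mem ?_
      intro v _
      exact fun k _ => dsc_root hT r k
    rw [hweightdef]
    simp only [this]
    have : 1 ≤ A.card := Finset.card_pos.2 ⟨v₀, hv₀⟩
    omega
  obtain ⟨i, himem, himax⟩ := Finset.exists_max_image
    (I.filter (fun i => A.card / 2 + 1 ≤ weight i)) (fun i => (tpath hT i r).length)
    ⟨r, Finset.mem_filter.2 ⟨hrI, hheavy_r⟩⟩
  rw [Finset.mem_filter] at himem
  obtain ⟨hiI, hiheavy⟩ := himem
  refine ⟨i, ?_⟩
  intro v₁ hv₁A hv₁B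
  -- within-subtree propagation of `Dsc i`
  have hSub_ne_i : ∀ u, u ∉ D.bag i → ∀ k ∈ Sub u, k ≠ i := by
    rintro u hub k ⟨hk1, _⟩ rfl
    exact hub hk1
  have prop_within : ∀ u, u ∉ D.bag i → ∀ k₀ ∈ Sub u, Dsc hT r i k₀ →
      ∀ k ∈ Sub u, Dsc hT r i k := by
    intro u hub k₀ hk₀ hd k hk
    have hchain := hSubConn u k₀ hk₀ k hk
    induction hchain with
    | refl => exact hd
    | tail h1 h2 ih =>
        exact adj_dsc hT r h2.1 (ih h2.2.1) (hSub_ne_i u hub _ h2.2.1)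
  -- component-level propagation of `Dsc i`
  have prop_comp : ∀ u₁ u₂, SChain G (exS A (D.bag i)) u₁ u₂ →
      (∀ k ∈ Sub u₁, Dsc hT r i k) → ∀ k ∈ Sub u₂, Dsc hT r i k := by
    intro u₁ u₂ hchain hP
    induction hchain with
    | refl => exact hP
    | @tail c b h1 h2 ih =>
        have hm := herepSub c h2.2.1.1 b h2.2.2.1 h2.1
        exact prop_within b h2.2.2.2 (erep c b) hm.2 (ih (erep c b) hm.1)
  by_cases hcase : Dsc hT r i (rep v₁)
  · -- the component lives strictly below `i`, inside a child subtree
    have hPv₁ : ∀ k ∈ Sub v₁, Dsc hT r i k :=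
      prop_within v₁ hv₁B (rep v₁) (hrepSub v₁ hv₁A) hcase
    obtain ⟨j, hadj, hchild, hjk₀⟩ :=
      child_exists hT r hcase (hSub_ne_i v₁ hv₁B _ (hrepSub v₁ hv₁A))
    have hjI : j ∈ I := hclosed (rep v₁) ((hrepSub v₁ hv₁A).2) r hrI j hjk₀
    have hjnotheavy : ¬ (A.card / 2 + 1 ≤ weight j) := by
      intro hjh
      have := himax j (Finset.mem_filter.2 ⟨hjI, hjh⟩)
      have := depth_lt_of_child hT r hadj hchild
      omega
    -- propagation of `Dsc j` within subtrees and across the component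
    have prop_within_j : ∀ u, u ∉ D.bag i → ∀ k₀ ∈ Sub u,
        (Dsc hT r i k₀ ∧ Dsc hT r j k₀) → ∀ k ∈ Sub u, Dsc hT r i k ∧ Dsc hT r j k := by
      intro u hub k₀ hk₀ hd k hk
      have hchain := hSubConn u k₀ hk₀ k hk
      induction hchain with
      | refl => exact hd
      | @tail c b h1 h2 ih =>
          have ihc := ih h2.2.1
          have hbne := hSub_ne_i u hub _ h2.2.2
          have hbi : Dsc hT r i b := adj_dsc hT r h2.1 ihc.1 (hSub_ne_i u hub _ h2.2.1)
          exact ⟨hbi, same_child hT r h2.1 hadj hchild ihc.2 hbi hbne⟩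
    have prop_comp_j : ∀ u₁ u₂, SChain G (exS A (D.bag i)) u₁ u₂ →
        (∀ k ∈ Sub u₁, Dsc hT r i k ∧ Dsc hT r j k) →
        ∀ k ∈ Sub u₂, Dsc hT r i k ∧ Dsc hT r j k := by
      intro u₁ u₂ hchain hP
      induction hchain with
      | refl => exact hP
      | @tail c b h1 h2 ih =>
          have hm := herepSub c h2.2.1.1 b h2.2.2.1 h2.1
          exact prop_within_j b h2.2.2.2 (erep c b) hm.2 (ih (erep c b) hm.1)
    have hQv₁ : ∀ k ∈ Sub v₁, Dsc hT r i k ∧ Dsc hT r j k :=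
      prop_within_j v₁ hv₁B (rep v₁) (hrepSub v₁ hv₁A) ⟨hcase, hjk₀⟩
    have hCsub : cutC G A (D.bag i) v₁ ⊆ A.filter (fun v => ∀ k ∈ Sub v, Dsc hT r j k) := by
      intro u hu
      rw [mem_cutC] at hu
      refine Finset.mem_filter.2 ⟨hu.1, ?_⟩
      intro k hk
      exact (prop_comp_j v₁ u hu.2.2 hQv₁ k hk).2
    have hcc := Finset.card_le_card hCsub
    have hjw : weight j = (A.filter (fun v => ∀ k ∈ Sub v, Dsc hT r j k)).card := rfl
    rw [hjw] at hjnotheavy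
    omega
  · -- the component lives outside the subtree of `i`
    have hCsub : cutC G A (D.bag i) v₁ ⊆
        A.filter (fun v => ¬ ∀ k ∈ Sub v, Dsc hT r i k) := by
      intro u hu
      rw [mem_cutC] at hu
      refine Finset.mem_filter.2 ⟨hu.1, ?_⟩
      intro hall
      exact hcase (prop_comp u v₁ (hu.2.2.symm) hall (rep v₁) (hrepSub v₁ hv₁A))
    have h1 := Finset.card_le_card hCsub
    have h2 := Finset.card_filter_add_card_filter_not
      (s := A) (p := fun v => ∀ k ∈ Sub v, Dsc hT r i k)
    have hiw : weight i = (A.filter (fun v => ∀ k ∈ Sub v, Dsc hT r i k)).card := rfl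
    rw [hiw] at hiheavy
    omega

end Separator

section Glue
open scoped Classical
open Relation
variable {V : Type} (G : SimpleGraph V)

def AncP (par : V → Option V) (u v : V) : Prop :=
  Relation.ReflTransGen (fun a b => par a = some b) v u

/-- there is a partial elimination forest of `G` on `A` of depth at most `d`. -/
def Good (A : Finset V) (d : ℕ) : Prop :=
  ∃ (par : V → Option V) (dep : V → ℕ),
    (∀ v ∈ A, 1 ≤ dep v ∧ dep v ≤ d) ∧
    (∀ v ∈ A, ∀ p, par v = some p → p ∈ A ∧ dep v = dep p + 1) ∧
    (∀ v ∈ A, par v = none → dep v = 1) ∧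
    (∀ u ∈ A, ∀ v ∈ A, G.Adj u v → AncP par u v ∨ AncP par v u)

variable {G}

lemma Good.mono {A : Finset V} {d d' : ℕ} (h : Good G A d) (hd : d ≤ d') : Good G A d' := by
  obtain ⟨par, dep, h1, h2, h3, h4⟩ := h
  exact ⟨par, dep, fun v hv => ⟨(h1 v hv).1, le_trans (h1 v hv).2 hd⟩, h2, h3, h4⟩

lemma good_singleton (a : V) (d : ℕ) (hd : 1 ≤ d) : Good G {a} d := by
  refine ⟨fun _ => none, fun _ => 1, ?_, ?_, ?_, ?_⟩
  · intro v _; exact ⟨le_rfl, hd⟩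
  · intro v _ p hp; simp at hp
  · intro v _ _; rfl
  · intro u hu v hv hadj
    rw [Finset.mem_singleton] at hu hv
    subst hu; subst hv
    exact absurd hadj (G.loopless.irrefl v)

lemma good_pair {a b : V} (hab : a ≠ b) (d : ℕ) (hd : 1 ≤ d)
    (h : G.Adj a b → 2 ≤ d) : Good G {a, b} d := by
  by_cases hadj : G.Adj a b
  · refine ⟨fun v => if v = b then some a else none,
      fun v => if v = b then 2 else 1, ?_, ?_, ?_, ?_⟩
    · intro v _
      dsimp only
      split
      · exact ⟨by omega, h hadj⟩
      · exact ⟨le_rfl, hd⟩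
    · intro v _ p hp
      dsimp only at hp ⊢
      by_cases hb : v = b
      · rw [if_pos hb] at hp
        rw [Option.some_inj] at hp
        subst hp
        rw [if_pos hb, if_neg hab]
        simp
      · rw [if_neg hb] at hp; exact absurd hp (by simp)
    · intro v _ hv
      dsimp only at hv ⊢
      by_cases hb : v = b
      · rw [if_pos hb] at hv; simp at hv
      · rw [if_neg hb]
    · intro u hu v hv huv
      have hanc : AncP (fun v => if v = b then some a else none) a b :=
        ReflTransGen.single (by simp)
      rcases Finset.mem_insert.1 hu with rfl | hu
      · rcases Finset.mem_insert.1 hv with rfl | hv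
        · exact absurd huv (G.loopless.irrefl _)
        · rw [Finset.mem_singleton] at hv; subst hv; exact Or.inl hanc
      · rw [Finset.mem_singleton] at hu; subst hu
        rcases Finset.mem_insert.1 hv with rfl | hv
        · exact Or.inr hanc
        · rw [Finset.mem_singleton] at hv; subst hv; exact absurd huv (G.loopless.irrefl _)
  · refine ⟨fun _ => none, fun _ => 1, ?_, ?_, ?_, ?_⟩
    · intro v _; exact ⟨le_rfl, hd⟩
    · intro v _ p hp; simp at hp
    · intro v _ _; rfl
    · intro u hu v hv huv
      exfalso
      rcases Finset.mem_insert.1 hu with rfl | hu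
      · rcases Finset.mem_insert.1 hv with rfl | hv
        · exact G.loopless.irrefl _ huv
        · rw [Finset.mem_singleton] at hv; subst hv; exact hadj huv
      · rw [Finset.mem_singleton] at hu; subst hu
        rcases Finset.mem_insert.1 hv with rfl | hv
        · exact hadj huv.symm
        · rw [Finset.mem_singleton] at hv; subst hv; exact G.loopless.irrefl _ huv

lemma good_empty (d : ℕ) : Good G ∅ d :=
  ⟨fun _ => none, fun _ => 1, by simp, by simp, by simp, by simp⟩

end Glue

section Glue2
open scoped Classical
open Relation
variable {V : Type}

noncomputable def ppar (G : SimpleGraph V) (d₂ : ℕ) (C : Finset V) : V → Option V :=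
  if h : Good G C d₂ then h.choose else fun _ => none

noncomputable def pdep (G : SimpleGraph V) (d₂ : ℕ) (C : Finset V) : V → ℕ :=
  if h : Good G C d₂ then h.choose_spec.choose else fun _ => 1

lemma ppar_spec {G : SimpleGraph V} {d₂ : ℕ} {C : Finset V} (h : Good G C d₂) :
    (∀ v ∈ C, 1 ≤ pdep G d₂ C v ∧ pdep G d₂ C v ≤ d₂) ∧
    (∀ v ∈ C, ∀ p, ppar G d₂ C v = some p → p ∈ C ∧ pdep G d₂ C v = pdep G d₂ C p + 1) ∧
    (∀ v ∈ C, ppar G d₂ C v = none → pdep G d₂ C v = 1) ∧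
    (∀ u ∈ C, ∀ v ∈ C, G.Adj u v → AncP (ppar G d₂ C) u v ∨ AncP (ppar G d₂ C) v u) := by
  have h1 : ppar G d₂ C = h.choose := dif_pos h
  have h2 : pdep G d₂ C = h.choose_spec.choose := dif_pos h
  rw [h1, h2]
  exact h.choose_spec.choose_spec

/-- the vertices of `A` in the bag `B`. -/
noncomputable def ABs (A : Finset V) (B : Set V) : Finset V := A.filter (fun x => x ∈ B)

noncomputable def beqv (A : Finset V) (B : Set V) : {x // x ∈ ABs A B} ≃ Fin (ABs A B).card :=
  Fintype.equivFinOfCardEq (Fintype.card_coe _)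

noncomputable def bvx (A : Finset V) (B : Set V) (m : Fin (ABs A B).card) : V :=
  ((beqv A B).symm m : V)

lemma bvx_mem (A : Finset V) (B : Set V) (m : Fin (ABs A B).card) : bvx A B m ∈ ABs A B :=
  ((beqv A B).symm m).2

lemma beqv_bvx (A : Finset V) (B : Set V) (m : Fin (ABs A B).card) (h : bvx A B m ∈ ABs A B) :
    (beqv A B) ⟨bvx A B m, h⟩ = m := by
  have : (⟨bvx A B m, h⟩ : {x // x ∈ ABs A B}) = (beqv A B).symm m := Subtype.ext rfl
  rw [this, Equiv.apply_symm_apply]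

noncomputable def gluePar (G : SimpleGraph V) (d₂ : ℕ) (A : Finset V) (B : Set V) :
    V → Option V := fun v =>
  if hv : v ∈ ABs A B then
    if h0 : ((beqv A B) ⟨v, hv⟩ : ℕ) = 0 then none
    else some (bvx A B ⟨((beqv A B) ⟨v, hv⟩ : ℕ) - 1, by
      have := ((beqv A B) ⟨v, hv⟩).2; omega⟩)
  else if v ∈ A ∧ v ∉ B then
    match ppar G d₂ (cutC G A B v) v with
    | some p => some p
    | none =>
        if h0 : 0 < (ABs A B).card then some (bvx A B ⟨(ABs A B).card - 1, by omega⟩) else none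
  else none

noncomputable def glueDep (G : SimpleGraph V) (d₂ : ℕ) (A : Finset V) (B : Set V) :
    V → ℕ := fun v =>
  if hv : v ∈ ABs A B then ((beqv A B) ⟨v, hv⟩ : ℕ) + 1
  else if v ∈ A ∧ v ∉ B then pdep G d₂ (cutC G A B v) v + (ABs A B).card
  else 1

variable {G : SimpleGraph V} {d₂ : ℕ} {A : Finset V} {B : Set V}

lemma not_mem_ABs {v : V} (hv : v ∉ B) : v ∉ ABs A B := by
  intro h
  rw [ABs, Finset.mem_filter] at h
  exact hv h.2

lemma glueDep_AB {v : V} (hv : v ∈ ABs A B) :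
    glueDep G d₂ A B v = ((beqv A B) ⟨v, hv⟩ : ℕ) + 1 := dif_pos hv

lemma glueDep_S {v : V} (hv : v ∈ A) (hvb : v ∉ B) :
    glueDep G d₂ A B v = pdep G d₂ (cutC G A B v) v + (ABs A B).card := by
  rw [glueDep, dif_neg (not_mem_ABs hvb), if_pos ⟨hv, hvb⟩]

lemma gluePar_AB_root {v : V} (hv : v ∈ ABs A B) (h0 : ((beqv A B) ⟨v, hv⟩ : ℕ) = 0) :
    gluePar G d₂ A B v = none := by
  rw [gluePar, dif_pos hv, dif_pos h0]

lemma gluePar_AB_step {v : V} (hv : v ∈ ABs A B) (h0 : ¬ ((beqv A B) ⟨v, hv⟩ : ℕ) = 0) :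
    gluePar G d₂ A B v = some (bvx A B ⟨((beqv A B) ⟨v, hv⟩ : ℕ) - 1, by
      have := ((beqv A B) ⟨v, hv⟩).2; omega⟩) := by
  rw [gluePar, dif_pos hv, dif_neg h0]

lemma gluePar_S_some {v p : V} (hv : v ∈ A) (hvb : v ∉ B)
    (hp : ppar G d₂ (cutC G A B v) v = some p) : gluePar G d₂ A B v = some p := by
  rw [gluePar, dif_neg (not_mem_ABs hvb), if_pos ⟨hv, hvb⟩, hp]

lemma gluePar_S_none_pos {v : V} (hv : v ∈ A) (hvb : v ∉ B)
    (hp : ppar G d₂ (cutC G A B v) v = none) (h0 : 0 < (ABs A B).card) :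
    gluePar G d₂ A B v = some (bvx A B ⟨(ABs A B).card - 1, by omega⟩) := by
  rw [gluePar, dif_neg (not_mem_ABs hvb), if_pos ⟨hv, hvb⟩, hp]
  exact dif_pos h0

lemma gluePar_S_none_zero {v : V} (hv : v ∈ A) (hvb : v ∉ B)
    (hp : ppar G d₂ (cutC G A B v) v = none) (h0 : ¬ 0 < (ABs A B).card) :
    gluePar G d₂ A B v = none := by
  rw [gluePar, dif_neg (not_mem_ABs hvb), if_pos ⟨hv, hvb⟩, hp]
  exact dif_neg h0

lemma good_glue (hcomp : ∀ v, v ∈ A → v ∉ B → Good G (cutC G A B v) d₂) :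
    Good G A ((ABs A B).card + d₂) := by
  classical
  have hCmem : ∀ v, v ∈ A → v ∉ B → v ∈ cutC G A B v := by
    intro v hv hvb; rw [mem_cutC]; exact ⟨hv, hvb, ReflTransGen.refl⟩
  have hCsub : ∀ v u, u ∈ cutC G A B v → u ∈ A ∧ u ∉ B := by
    intro v u hu; rw [mem_cutC] at hu; exact ⟨hu.1, hu.2.1⟩
  have hCeq : ∀ v u, u ∈ cutC G A B v → cutC G A B u = cutC G A B v := by
    intro v u hu
    rw [mem_cutC] at hu
    ext w
    rw [mem_cutC, mem_cutC]
    constructor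
    · rintro ⟨h1, h2, h3⟩; exact ⟨h1, h2, hu.2.2.trans h3⟩
    · rintro ⟨h1, h2, h3⟩; exact ⟨h1, h2, (SChain.symm hu.2.2).trans h3⟩
  have hABmem : ∀ v, v ∈ ABs A B → v ∈ A ∧ v ∈ B := by
    intro v hv; rw [ABs, Finset.mem_filter] at hv; exact hv
  -- depth of the b-chain vertices
  have hdep_bv : ∀ m : Fin (ABs A B).card, glueDep G d₂ A B (bvx A B m) = (m : ℕ) + 1 := by
    intro m
    rw [glueDep_AB (bvx_mem A B m), beqv_bvx A B m (bvx_mem A B m)]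
  -- ancestry along the b-chain
  have ancAB : ∀ (n : ℕ) (b : V) (hb : b ∈ ABs A B), ((beqv A B) ⟨b, hb⟩ : ℕ) ≤ n →
      ∀ (a : V) (ha : a ∈ ABs A B),
      ((beqv A B) ⟨a, ha⟩ : ℕ) ≤ ((beqv A B) ⟨b, hb⟩ : ℕ) →
      AncP (gluePar G d₂ A B) a b := by
    intro n
    induction n with
    | zero =>
        intro b hb hbn a ha hab
        have : (beqv A B) ⟨a, ha⟩ = (beqv A B) ⟨b, hb⟩ := Fin.ext (by omega)
        have : a = b := congrArg Subtype.val ((beqv A B).injective this)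
        subst this
        exact ReflTransGen.refl
    | succ n ih =>
        intro b hb hbn a ha hab
        by_cases heq : ((beqv A B) ⟨a, ha⟩ : ℕ) = ((beqv A B) ⟨b, hb⟩ : ℕ)
        · have : (beqv A B) ⟨a, ha⟩ = (beqv A B) ⟨b, hb⟩ := Fin.ext heq
          have : a = b := congrArg Subtype.val ((beqv A B).injective this)
          subst this
          exact ReflTransGen.refl
        · have h0 : ¬ ((beqv A B) ⟨b, hb⟩ : ℕ) = 0 := by omega
          set m : Fin (ABs A B).card := ⟨((beqv A B) ⟨b, hb⟩ : ℕ) - 1, by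
            have := ((beqv A B) ⟨b, hb⟩).2; omega⟩ with hmdef
          refine ReflTransGen.head (gluePar_AB_step hb h0) (ih (bvx A B m) (bvx_mem A B m) ?_
            a ha ?_)
          · rw [beqv_bvx A B m (bvx_mem A B m)]
            simp only [hmdef]
            omega
          · rw [beqv_bvx A B m (bvx_mem A B m)]
            simp only [hmdef]
            omega
  -- every component vertex descends from the last b-chain vertex
  have ancTop : ∀ (m : Fin (ABs A B).card), (m : ℕ) = (ABs A B).card - 1 →
      ∀ (n : ℕ) (v : V), v ∈ A → v ∉ B →
      pdep G d₂ (cutC G A B v) v ≤ n →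
      AncP (gluePar G d₂ A B) (bvx A B m) v := by
    intro m hm n
    have h0 : 0 < (ABs A B).card := lt_of_le_of_lt (Nat.zero_le _) m.2
    induction n with
    | zero =>
        intro v hv hvb hd
        have := ((ppar_spec (hcomp v hv hvb)).1 v (hCmem v hv hvb)).1
        omega
    | succ n ih =>
        intro v hv hvb hd
        cases hp : ppar G d₂ (cutC G A B v) v with
        | none =>
            have hmeq : m = ⟨(ABs A B).card - 1, by omega⟩ := Fin.ext (by simp only [Fin.val_mk]; omega)
            rw [hmeq]
            exact ReflTransGen.head (gluePar_S_none_pos hv hvb hp h0) ReflTransGen.refl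
        | some p =>
            have hprops := (ppar_spec (hcomp v hv hvb)).2.1 v (hCmem v hv hvb) p hp
            have hpA := hCsub v p hprops.1
            have hceq := hCeq v p hprops.1
            refine ReflTransGen.head (gluePar_S_some hv hvb hp) (ih p hpA.1 hpA.2 ?_)
            rw [hceq]
            omega
  -- lifting ancestry inside a component
  have liftAnc : ∀ (v : V), v ∈ A → v ∉ B → ∀ (a b : V),
      AncP (ppar G d₂ (cutC G A B v)) a b → b ∈ cutC G A B v →
      AncP (gluePar G d₂ A B) a b := by
    intro v hv hvb a b hanc
    unfold AncP at hanc ⊢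
    induction hanc using Relation.ReflTransGen.head_induction_on with
    | refl => intro _; exact ReflTransGen.refl
    | @head x c step tl ih =>
        intro hx
        have hxA := hCsub v x hx
        have hceq := hCeq v x hx
        have hstep : ppar G d₂ (cutC G A B x) x = some c := by rw [hceq]; exact step
        have hc : c ∈ cutC G A B v :=
          ((ppar_spec (hcomp v hv hvb)).2.1 x hx c step).1
        exact ReflTransGen.head (gluePar_S_some hxA.1 hxA.2 hstep) (ih hc)
  refine ⟨gluePar G d₂ A B, glueDep G d₂ A B, ?_, ?_, ?_, ?_⟩
  · -- depth bounds
    intro v hv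
    by_cases hb : v ∈ B
    · have hAB : v ∈ ABs A B := by rw [ABs, Finset.mem_filter]; exact ⟨hv, hb⟩
      rw [glueDep_AB hAB]
      have := ((beqv A B) ⟨v, hAB⟩).2
      omega
    · rw [glueDep_S hv hb]
      have := (ppar_spec (hcomp v hv hb)).1 v (hCmem v hv hb)
      omega
  · -- parent structure
    intro v hv p hp
    by_cases hb : v ∈ B
    · have hAB : v ∈ ABs A B := by rw [ABs, Finset.mem_filter]; exact ⟨hv, hb⟩
      by_cases h0 : ((beqv A B) ⟨v, hAB⟩ : ℕ) = 0
      · rw [gluePar_AB_root hAB h0] at hp; exact absurd hp (by simp)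
      · rw [gluePar_AB_step hAB h0] at hp
        rw [Option.some_inj] at hp
        subst hp
        constructor
        · exact (hABmem _ (bvx_mem A B _)).1
        · rw [glueDep_AB hAB, hdep_bv]
          simp only [Fin.val_mk]
          have := ((beqv A B) ⟨v, hAB⟩).2
          omega
    · cases hpp : ppar G d₂ (cutC G A B v) v with
      | some q =>
          have hq : p = q := by
            rw [gluePar_S_some hv hb hpp] at hp
            exact (Option.some_inj.1 hp).symm
          rw [hq]
          have hprops := (ppar_spec (hcomp v hv hb)).2.1 v (hCmem v hv hb) q hpp
          have hpA := hCsub v q hprops.1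
          have hceq := hCeq v q hprops.1
          constructor
          · exact hpA.1
          · rw [glueDep_S hv hb, glueDep_S hpA.1 hpA.2, hceq]
            omega
      | none =>
          by_cases h0 : 0 < (ABs A B).card
          · rw [gluePar_S_none_pos hv hb hpp h0, Option.some_inj] at hp
            subst hp
            constructor
            · exact (hABmem _ (bvx_mem A B _)).1
            · rw [glueDep_S hv hb, hdep_bv]
              simp only [Fin.val_mk]
              have hone := (ppar_spec (hcomp v hv hb)).2.2.1 v (hCmem v hv hb) hpp
              omega
          · rw [gluePar_S_none_zero hv hb hpp h0] at hp
            exact absurd hp (by simp)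
  · -- roots have depth 1
    intro v hv hp
    by_cases hb : v ∈ B
    · have hAB : v ∈ ABs A B := by rw [ABs, Finset.mem_filter]; exact ⟨hv, hb⟩
      by_cases h0 : ((beqv A B) ⟨v, hAB⟩ : ℕ) = 0
      · rw [glueDep_AB hAB, h0]
      · rw [gluePar_AB_step hAB h0] at hp; exact absurd hp (by simp)
    · cases hpp : ppar G d₂ (cutC G A B v) v with
      | some q => rw [gluePar_S_some hv hb hpp] at hp; exact absurd hp (by simp)
      | none =>
          by_cases h0 : 0 < (ABs A B).card
          · rw [gluePar_S_none_pos hv hb hpp h0] at hp; exact absurd hp (by simp)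
          · rw [glueDep_S hv hb]
            have hone := (ppar_spec (hcomp v hv hb)).2.2.1 v (hCmem v hv hb) hpp
            omega
  · -- elimination property
    intro u hu v hv hadj
    by_cases hub : u ∈ B
    · have huAB : u ∈ ABs A B := by rw [ABs, Finset.mem_filter]; exact ⟨hu, hub⟩
      by_cases hvb : v ∈ B
      · -- both on the b-chain: compare positions
        have hvAB : v ∈ ABs A B := by rw [ABs, Finset.mem_filter]; exact ⟨hv, hvb⟩
        rcases Nat.le_total ((beqv A B) ⟨u, huAB⟩ : ℕ) ((beqv A B) ⟨v, hvAB⟩ : ℕ) with h | h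
        · exact Or.inl (ancAB _ v hvAB le_rfl u huAB h)
        · exact Or.inr (ancAB _ u huAB le_rfl v hvAB h)
      · -- u on chain, v in a component
        refine Or.inl ?_
        have h0 : 0 < (ABs A B).card := Finset.card_pos.2 ⟨u, huAB⟩
        have htop := ancTop ⟨(ABs A B).card - 1, by omega⟩ (by simp) _ v hv hvb le_rfl
        have hua : AncP (gluePar G d₂ A B) u (bvx A B ⟨(ABs A B).card - 1, by omega⟩) := by
          refine ancAB _ _ (bvx_mem A B _) le_rfl u huAB ?_
          rw [beqv_bvx]
          have := ((beqv A B) ⟨u, huAB⟩).2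
          simp only [Fin.val_mk]
          omega
        exact Relation.ReflTransGen.trans htop hua
    · by_cases hvb : v ∈ B
      · have hvAB : v ∈ ABs A B := by rw [ABs, Finset.mem_filter]; exact ⟨hv, hvb⟩
        refine Or.inr ?_
        have h0 : 0 < (ABs A B).card := Finset.card_pos.2 ⟨v, hvAB⟩
        have htop := ancTop ⟨(ABs A B).card - 1, by omega⟩ (by simp) _ u hu hub le_rfl
        have hua : AncP (gluePar G d₂ A B) v (bvx A B ⟨(ABs A B).card - 1, by omega⟩) := by
          refine ancAB _ _ (bvx_mem A B _) le_rfl v hvAB ?_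
          rw [beqv_bvx]
          have := ((beqv A B) ⟨v, hvAB⟩).2
          simp only [Fin.val_mk]
          omega
        exact Relation.ReflTransGen.trans htop hua
      · -- both in components; adjacency puts them in the same component
        have hvC : v ∈ cutC G A B u := by
          rw [mem_cutC]
          exact ⟨hv, hvb, ReflTransGen.single ⟨hadj, ⟨hu, hub⟩, ⟨hv, hvb⟩⟩⟩
        have huC : u ∈ cutC G A B u := hCmem u hu hub
        rcases (ppar_spec (hcomp u hu hub)).2.2.2 u huC v hvC hadj with h | h
        · exact Or.inl (liftAnc u hu hub u v h hvC)
        · exact Or.inr (liftAnc u hu hub v u h huC)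

end Glue2

section Main
open scoped Classical
variable {V : Type} [Fintype V] {G : SimpleGraph V}

lemma good_of_decomp {ι : Type} (D : TreeDecomp G ι) (w : ℕ)
    (hw : ∀ i, (D.bag i).ncard ≤ w + 1) :
    ∀ (n : ℕ) (A : Finset V), A.card ≤ n →
      Good G A ((w + 1) * max 1 (Nat.clog 2 A.card)) := by
  intro n
  induction n with
  | zero =>
      intro A hA
      rw [Finset.card_eq_zero.1 (Nat.le_zero.1 hA)]
      exact good_empty _
  | succ n ih =>
      intro A hA
      by_cases hsmall : A.card ≤ n
      · exact ih A hsmall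
      have hcard : A.card = n + 1 := by omega
      rcases Nat.lt_or_ge A.card 3 with h3 | h3
      · -- small cases
        interval_cases hc : A.card
        · rw [Finset.card_eq_zero.1 hc]
          exact good_empty _
        · obtain ⟨a, ha⟩ := Finset.card_eq_one.1 hc
          rw [ha]
          refine good_singleton a _ ?_
          have h1 : (1 : ℕ) ⊔ Nat.clog 2 1 = 1 := by
            rw [Nat.clog_one_right]
            omega
          rw [h1, mul_one]
          omega
        · obtain ⟨a, b, hab, hA2⟩ := Finset.card_eq_two.1 hc
          have hclog : Nat.clog 2 2 = 1 := Nat.clog_eq_one le_rfl le_rfl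
          rw [hA2, hclog, max_self, mul_one]
          refine good_pair hab _ (by omega) ?_
          intro hadj
          obtain ⟨i, hi1, hi2⟩ := D.covers_edge a b hadj
          have hsub : ({a, b} : Set V) ⊆ D.bag i := by
            rintro x (rfl | rfl)
            · exact hi1
            · exact hi2
          have h2 : ({a, b} : Set V).ncard = 2 := Set.ncard_pair hab
          have h3 := Set.ncard_le_ncard hsub (Set.toFinite _)
          have h4 := hw i
          omega
      · -- main case: balanced separator
        obtain ⟨i, hi⟩ := exists_balanced_bag D A (Finset.card_pos.1 (by omega))
        set L := Nat.clog 2 A.card with hLdef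
        have hL2 : 2 ≤ L := by
          rw [hLdef]
          by_contra hc
          have : Nat.clog 2 A.card ≤ 1 := by omega
          have := (Nat.clog_le_iff_le_pow one_lt_two).1 this
          omega
        have hpow : A.card ≤ 2 ^ L := Nat.le_pow_clog one_lt_two _
        have hcomp : ∀ v, v ∈ A → v ∉ D.bag i →
            Good G (cutC G A (D.bag i) v) ((w + 1) * (L - 1)) := by
          intro v hv hvb
          have hc := hi v hv hvb
          have hle : (cutC G A (D.bag i) v).card ≤ n := by omega
          refine (ih _ hle).mono ?_
          have hckey : Nat.clog 2 (cutC G A (D.bag i) v).card ≤ L - 1 := by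
            refine (Nat.clog_le_iff_le_pow one_lt_two).2 ?_
            have h1 : A.card / 2 ≤ 2 ^ L / 2 := Nat.div_le_div_right hpow
            have h2 : 2 ^ L / 2 = 2 ^ (L - 1) := by
              have : 2 ^ L = 2 ^ (L - 1) * 2 := by
                rw [← pow_succ]
                congr 1
                omega
              rw [this]
              exact Nat.mul_div_cancel _ (by omega)
            omega
          have : max 1 (Nat.clog 2 (cutC G A (D.bag i) v).card) ≤ L - 1 := by
            rw [max_le_iff]
            exact ⟨by omega, hckey⟩
          exact Nat.mul_le_mul_left _ this
        have hglue := good_glue hcomp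
        have hABcard : (ABs A (D.bag i)).card ≤ w + 1 := by
          have hsub : ABs A (D.bag i) ⊆ (D.bag i).toFinset := by
            intro x hx
            rw [ABs, Finset.mem_filter] at hx
            rw [Set.mem_toFinset]
            exact hx.2
          have h1 := Finset.card_le_card hsub
          have h2 : (D.bag i).toFinset.card = (D.bag i).ncard := by
            rw [Set.ncard_eq_toFinset_card']
          have := hw i
          omega
        refine hglue.mono ?_
        have hmax : max 1 L = L := max_eq_right (by omega)
        rw [hmax]
        have hexp : (w + 1) * L = (w + 1) + (w + 1) * (L - 1) := by
          obtain ⟨L', hL'⟩ : ∃ L', L = L' + 1 := ⟨L - 1, by omega⟩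
          rw [hL', Nat.add_sub_cancel]
          ring
        omega

lemma treedepth_le_of_good {d : ℕ} (h : Good G Finset.univ d) : G.treedepth ≤ d := by
  obtain ⟨par, dep, h1, h2, h3, h4⟩ := h
  refine Nat.sInf_le ?_
  refine ⟨⟨par, dep, ?_, ?_⟩, ?_, ?_⟩
  · exact fun v hv => h3 v (Finset.mem_univ v) hv
  · exact fun v p hp => (h2 v (Finset.mem_univ v) p hp).2
  · exact fun u v hadj => h4 u (Finset.mem_univ u) v (Finset.mem_univ v) hadj
  · exact fun v => (h1 v (Finset.mem_univ v)).2

lemma treewidth_mem_aux [Nonempty V] (G : SimpleGraph V) :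
    (Fintype.card V - 1) ∈
      {w | ∃ (ι : Type) (D : TreeDecomp G ι), ∀ i, (D.bag i).ncard ≤ w + 1} := by
  refine ⟨PUnit, ⟨⊥, ⟨?_, SimpleGraph.isAcyclic_bot⟩, fun _ => Set.univ,
    fun v => ⟨PUnit.unit, Set.mem_univ v⟩, fun u v _ => ⟨PUnit.unit, Set.mem_univ u, Set.mem_univ v⟩,
    fun v => ?_⟩, fun i => ?_⟩
  · exact ⟨fun u v => by rw [Subsingleton.elim u v]⟩
  · have hne : Nonempty {i : PUnit | v ∈ (fun _ : PUnit => (Set.univ : Set V)) i} :=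
      ⟨⟨PUnit.unit, Set.mem_univ v⟩⟩
    refine SimpleGraph.Connected.mk ?_
    intro a b
    rw [Subsingleton.elim a b]
  · rw [Set.ncard_univ, Nat.card_eq_fintype_card]
    have : 1 ≤ Fintype.card V := Fintype.card_pos
    omega

theorem part_two (hn : 2 ≤ Fintype.card V) :
    G.treedepth ≤ (G.treewidth + 1) * Nat.clog 2 (Fintype.card V) := by
  have hne : Nonempty V := Fintype.card_pos_iff.1 (by omega)
  have hW := Nat.sInf_mem ⟨_, treewidth_mem_aux G⟩
  obtain ⟨ι, D, hD⟩ := hW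
  have hgood := good_of_decomp D G.treewidth hD (Fintype.card V) Finset.univ
    (by rw [Finset.card_univ])
  rw [Finset.card_univ] at hgood
  have hclog : 1 ≤ Nat.clog 2 (Fintype.card V) := Nat.clog_pos one_lt_two hn
  rw [max_eq_right hclog] at hgood
  exact treedepth_le_of_good hgood

end Main

theorem treewidth_lt_treedepth_le_log {V : Type} [Fintype V] (G : SimpleGraph V)
    (hn : 2 ≤ Fintype.card V) :
    G.treewidth + 1 ≤ G.treedepth ∧
    G.treedepth ≤ (G.treewidth + 1) * Nat.clog 2 (Fintype.card V) :=
  ⟨part_one hn, part_two hn⟩
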